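/- arXiv:1806.06248 — 3 statements merged into one kernel-verified Lean document; each statement's English description precedes it below -/
import Mathlib

section
/- Let X, Y be Banach spaces and F : X → Y* be continuously differentiable. Suppose u_0 ∈ X is a regular solution of F(u) = 0, i.e., F(u_0) = 0 and DF(u_0) is a linear homeomorphism from X to Y*. Assume DF is Lipschitz at u_0 with constant γ on the ball B(u_0, R_0), i.e., ‖DF(u) − DF(u_0)‖ ≤ γ‖u − u_0‖ for all u ∈ B(u_0, R_0). Set R = min{R_0, γ^{-1}‖DF(u_0)^{-1}‖^{-1}, 2γ^{-1}‖DF(u_0)‖}. Then for all u ∈ B(u_0, R), (1/2)‖DF(u_0)‖^{-1}‖F(u)‖_{Y*} ≤ ‖u − u_0‖_X ≤ 2‖DF(u_0)^{-1}‖‖F(u)‖_{Y*}. -/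
set_option maxHeartbeats 1000000


/-- Proposition 3.4 (Verfürth): two-sided a posteriori error bound near a regular
solution `u0` of `F u = 0`, where `F : X → Y*` is `C¹` with derivative `DF`,
`DF u0` is a linear homeomorphism (given by the equivalence `e`), and `DF` is
Lipschitz at `u0` with constant `γ` on the ball of radius `R0`. -/
theorem verfurth_two_sided_bound
    {X Y : Type*} [NormedAddCommGroup X] [NormedSpace ℝ X] [CompleteSpace X]
    [NormedAddCommGroup Y] [NormedSpace ℝ Y] [CompleteSpace Y]
    (F : X → (Y →L[ℝ] ℝ)) (DF : X → (X →L[ℝ] (Y →L[ℝ] ℝ)))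
    (hF : ContDiff ℝ 1 F) (hDF : ∀ u, HasFDerivAt F (DF u) u)
    (u0 : X) (hroot : F u0 = 0)
    (e : X ≃L[ℝ] (Y →L[ℝ] ℝ)) (he : (e : X →L[ℝ] (Y →L[ℝ] ℝ)) = DF u0)
    (γ R0 : ℝ) (hγ : 0 < γ) (hR0 : 0 < R0)
    (hLip : ∀ u, ‖u - u0‖ < R0 → ‖DF u - DF u0‖ ≤ γ * ‖u - u0‖) :
    ∀ u, ‖u - u0‖ < min R0 (min (γ⁻¹ * ‖(e.symm : (Y →L[ℝ] ℝ) →L[ℝ] X)‖⁻¹)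
        (2 * γ⁻¹ * ‖DF u0‖)) →
      (1 / 2) * ‖DF u0‖⁻¹ * ‖F u‖ ≤ ‖u - u0‖ ∧
      ‖u - u0‖ ≤ 2 * ‖(e.symm : (Y →L[ℝ] ℝ) →L[ℝ] X)‖ * ‖F u‖ := by
  intro u hu
  rcases eq_or_ne u u0 with rfl | hne
  · simp [hroot]
  have hr : 0 < ‖u - u0‖ := by
    simpa [sub_eq_zero] using hne
  have huR0 : ‖u - u0‖ < R0 := lt_of_lt_of_le hu (min_le_left _ _)
  have hu1 : ‖u - u0‖ < γ⁻¹ * ‖(e.symm : (Y →L[ℝ] ℝ) →L[ℝ] X)‖⁻¹ :=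
    lt_of_lt_of_le hu ((min_le_right _ _).trans (min_le_left _ _))
  have hu2 : ‖u - u0‖ < 2 * γ⁻¹ * ‖DF u0‖ :=
    lt_of_lt_of_le hu ((min_le_right _ _).trans (min_le_right _ _))
  set w : X := u - u0 with hw
  -- continuity of DF
  have hDFcont : Continuous DF := by
    have h1 : ∀ x, fderiv ℝ F x = DF x := fun x => (hDF x).fderiv
    have h2 := hF.continuous_fderiv one_ne_zero
    simpa [funext h1] using h2
  -- key Taylor estimate
  have key : ‖F u - (DF u0) w‖ ≤ γ / 2 * ‖w‖ ^ 2 := by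
    have hline : ∀ t : ℝ, HasDerivAt (fun t => F (u0 + t • w) - t • (DF u0) w)
        ((DF (u0 + t • w)) w - (DF u0) w) t := by
      intro t
      have h1 : HasDerivAt (fun t : ℝ => u0 + t • w) w t := by
        simpa using ((hasDerivAt_id t).smul_const w).const_add u0
      exact ((hDF (u0 + t • w)).comp_hasDerivAt t h1).sub
        (by simpa using (hasDerivAt_id t).smul_const ((DF u0) w))
    have hcont : Continuous fun t : ℝ => (DF (u0 + t • w)) w - (DF u0) w :=
      ((hDFcont.comp (by continuity)).clm_apply continuous_const).sub continuous_const
    have hI := intervalIntegral.integral_eq_sub_of_hasDerivAt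
      (f := fun t => F (u0 + t • w) - t • (DF u0) w) (a := (0 : ℝ)) (b := 1)
      (fun t _ => hline t) (hcont.intervalIntegrable 0 1)
    have hIval : (∫ t in (0 : ℝ)..1, ((DF (u0 + t • w)) w - (DF u0) w))
        = F u - (DF u0) w := by
      rw [hI]
      simp [hw, hroot]
    have hgint : IntervalIntegrable (fun t : ℝ => γ * ‖w‖ ^ 2 * t)
        MeasureTheory.volume 0 1 :=
      (continuous_const.mul continuous_id).intervalIntegrable 0 1
    have hb : ∀ᵐ t ∂MeasureTheory.volume.restrict (Set.uIoc (0 : ℝ) 1),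
        ‖(DF (u0 + t • w)) w - (DF u0) w‖ ≤ γ * ‖w‖ ^ 2 * t := by
      refine MeasureTheory.ae_restrict_of_forall_mem measurableSet_uIoc ?_
      intro t ht
      rw [Set.uIoc_of_le (by norm_num)] at ht
      have ht0 : 0 < t := ht.1
      have ht1 : t ≤ 1 := ht.2
      have h3 : ‖(u0 + t • w) - u0‖ = t * ‖w‖ := by
        simp [norm_smul, abs_of_pos ht0]
      have hmem : ‖(u0 + t • w) - u0‖ < R0 := by
        rw [h3]
        calc t * ‖w‖ ≤ 1 * ‖w‖ := mul_le_mul_of_nonneg_right ht1 (norm_nonneg _)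
          _ < R0 := by simpa using huR0
      have h1 : ‖(DF (u0 + t • w)) w - (DF u0) w‖
          ≤ ‖DF (u0 + t • w) - DF u0‖ * ‖w‖ := by
        rw [show (DF (u0 + t • w)) w - (DF u0) w = (DF (u0 + t • w) - DF u0) w from rfl]
        exact ContinuousLinearMap.le_opNorm _ _
      have h2 := hLip _ hmem
      calc ‖(DF (u0 + t • w)) w - (DF u0) w‖
          ≤ (γ * (t * ‖w‖)) * ‖w‖ := by
            refine h1.trans (mul_le_mul_of_nonneg_right ?_ (norm_nonneg _))
            rw [← h3]; exact h2
        _ = γ * ‖w‖ ^ 2 * t := by ring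
    have hnorm := intervalIntegral.norm_integral_le_abs_of_norm_le hb hgint
    rw [hIval] at hnorm
    refine hnorm.trans ?_
    have hval : (∫ t in (0 : ℝ)..1, γ * ‖w‖ ^ 2 * t) = γ / 2 * ‖w‖ ^ 2 := by
      rw [intervalIntegral.integral_const_mul, integral_id]
      ring
    rw [hval, abs_of_nonneg (by positivity)]
  -- abbreviations
  set M : ℝ := ‖(e.symm : (Y →L[ℝ] ℝ) →L[ℝ] X)‖ with hM
  have hM0 : 0 < M := by
    by_contra h
    push_neg at h
    have hM' : M = 0 := le_antisymm h (by rw [hM]; exact norm_nonneg ((e.symm : (Y →L[ℝ] ℝ) →L[ℝ] X)))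
    rw [hM'] at hu1
    simp at hu1
    linarith
  have hN0 : 0 < ‖DF u0‖ := by
    by_contra h
    push_neg at h
    have hN' : ‖DF u0‖ = 0 := le_antisymm h (norm_nonneg (DF u0))
    rw [hN'] at hu2
    simp at hu2
    linarith
  constructor
  · -- lower bound
    have h1 : ‖F u‖ ≤ ‖(DF u0) w‖ + γ / 2 * ‖w‖ ^ 2 := by
      calc ‖F u‖ = ‖(DF u0) w + (F u - (DF u0) w)‖ := by congr 1; abel
        _ ≤ ‖(DF u0) w‖ + ‖F u - (DF u0) w‖ := norm_add_le _ _
        _ ≤ ‖(DF u0) w‖ + γ / 2 * ‖w‖ ^ 2 := by linarith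
    have h2 : ‖(DF u0) w‖ ≤ ‖DF u0‖ * ‖w‖ := ContinuousLinearMap.le_opNorm _ _
    have h3 : γ / 2 * ‖w‖ ^ 2 ≤ ‖DF u0‖ * ‖w‖ := by
      have hkey : γ / 2 * ‖w‖ ≤ ‖DF u0‖ := by
        have h4 : γ * ‖w‖ < γ * (γ⁻¹ * (2 * ‖DF u0‖)) := by
          apply mul_lt_mul_of_pos_left _ hγ
          calc ‖w‖ < 2 * γ⁻¹ * ‖DF u0‖ := hu2
            _ = γ⁻¹ * (2 * ‖DF u0‖) := by ring
        rw [← mul_assoc, mul_inv_cancel₀ (ne_of_gt hγ), one_mul] at h4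
        linarith
      calc γ / 2 * ‖w‖ ^ 2 = (γ / 2 * ‖w‖) * ‖w‖ := by ring
        _ ≤ ‖DF u0‖ * ‖w‖ := mul_le_mul_of_nonneg_right hkey (norm_nonneg _)
    have h4 : ‖F u‖ ≤ 2 * ‖DF u0‖ * ‖w‖ := by linarith
    have h5 : (1 / 2) * ‖DF u0‖⁻¹ * ‖F u‖
        ≤ (1 / 2) * ‖DF u0‖⁻¹ * (2 * ‖DF u0‖ * ‖w‖) := by
      apply mul_le_mul_of_nonneg_left h4
      positivity
    have h6 : (1 / 2) * ‖DF u0‖⁻¹ * (2 * ‖DF u0‖ * ‖w‖) = ‖w‖ := by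
      field_simp
    linarith
  · -- upper bound
    have h1 : ‖w‖ ≤ M * ‖(DF u0) w‖ := by
      have heq : w = (e.symm : (Y →L[ℝ] ℝ) →L[ℝ] X) ((DF u0) w) := by
        rw [← he]
        simp
      calc ‖w‖ = ‖(e.symm : (Y →L[ℝ] ℝ) →L[ℝ] X) ((DF u0) w)‖ := by rw [← heq]
        _ ≤ M * ‖(DF u0) w‖ := ContinuousLinearMap.le_opNorm _ _
    have h2 : ‖(DF u0) w‖ ≤ ‖F u‖ + γ / 2 * ‖w‖ ^ 2 := by
      calc ‖(DF u0) w‖ = ‖F u - (F u - (DF u0) w)‖ := by congr 1; abel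
        _ ≤ ‖F u‖ + ‖F u - (DF u0) w‖ := norm_sub_le _ _
        _ ≤ ‖F u‖ + γ / 2 * ‖w‖ ^ 2 := by linarith
    have h3 : M * γ * ‖w‖ < 1 := by
      have h4 : γ * ‖w‖ < γ * (γ⁻¹ * M⁻¹) := mul_lt_mul_of_pos_left hu1 hγ
      rw [← mul_assoc, mul_inv_cancel₀ (ne_of_gt hγ), one_mul] at h4
      calc M * γ * ‖w‖ = M * (γ * ‖w‖) := by ring
        _ < M * M⁻¹ := mul_lt_mul_of_pos_left h4 hM0
        _ = 1 := mul_inv_cancel₀ (ne_of_gt hM0)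
    have h5 : ‖w‖ ≤ M * ‖F u‖ + (M * γ * ‖w‖ / 2) * ‖w‖ := by
      have h6 := h1.trans (mul_le_mul_of_nonneg_left h2 (le_of_lt hM0))
      calc ‖w‖ ≤ M * (‖F u‖ + γ / 2 * ‖w‖ ^ 2) := h6
        _ = M * ‖F u‖ + (M * γ * ‖w‖ / 2) * ‖w‖ := by ring
    nlinarith [hr, hM0.le]
end

section
/- Upper bound half of Proposition 3.4 (Verfürth): Let X, Y be Banach spaces, F : X → Y* continuously differentiable with F(u_0) = 0 and DF(u_0) invertible (a linear homeomorphism). If ‖DF(u) − DF(u_0)‖ ≤ γ‖u − u_0‖ for all u with ‖u − u_0‖ < R_0, then for every u with ‖u − u_0‖ ≤ min{R_0, (2γ)^{-1}‖DF(u_0)^{-1}‖^{-1}}, one has ‖u − u_0‖_X ≤ 2‖DF(u_0)^{-1}‖ · ‖F(u)‖_{Y*}. -/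
set_option maxHeartbeats 2000000 in
/-- Upper bound half of Proposition 3.4 (Verfürth). -/
theorem verfurth_upper_bound
    {X Y : Type*} [NormedAddCommGroup X] [NormedSpace ℝ X] [CompleteSpace X]
    [NormedAddCommGroup Y] [NormedSpace ℝ Y] [CompleteSpace Y]
    (F : X → (Y →L[ℝ] ℝ)) (DF : X → (X →L[ℝ] (Y →L[ℝ] ℝ)))
    (hF : ContDiff ℝ 1 F) (hDF : ∀ u, HasFDerivAt F (DF u) u)
    (u0 : X) (hroot : F u0 = 0)
    (e : X ≃L[ℝ] (Y →L[ℝ] ℝ)) (he : (e : X →L[ℝ] (Y →L[ℝ] ℝ)) = DF u0)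
    (γ R0 : ℝ) (hγ : 0 < γ) (hR0 : 0 < R0)
    (hLip : ∀ u, ‖u - u0‖ < R0 → ‖DF u - DF u0‖ ≤ γ * ‖u - u0‖) :
    ∀ u, ‖u - u0‖ ≤ min R0 ((2 * γ)⁻¹ * ‖(e.symm : (Y →L[ℝ] ℝ) →L[ℝ] X)‖⁻¹) →
      ‖u - u0‖ ≤ 2 * ‖(e.symm : (Y →L[ℝ] ℝ) →L[ℝ] X)‖ * ‖F u‖ := by
  set N := ‖(e.symm : (Y →L[ℝ] ℝ) →L[ℝ] X)‖ with hN
  have hDFeq : DF = fderiv ℝ F := by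
    funext v; exact ((hDF v).fderiv).symm
  have hcont : Continuous DF := by
    rw [hDFeq]; exact hF.continuous_fderiv one_ne_zero
  -- Extend the Lipschitz bound to the closed ball
  have hLip' : ∀ v, ‖v - u0‖ ≤ R0 → ‖DF v - DF u0‖ ≤ γ * ‖v - u0‖ := by
    intro v hv
    rcases lt_or_eq_of_le hv with h | h
    · exact hLip v h
    · -- ‖v - u0‖ = R0; approach along the segment
      have hne : (Set.Ioo (0:ℝ) 1).Nonempty := ⟨1/2, by norm_num⟩
      haveI : Filter.NeBot (nhdsWithin (1:ℝ) (Set.Ioo (0:ℝ) 1)) :=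
        right_nhdsWithin_Ioo_neBot (by norm_num)
      have htend : Filter.Tendsto (fun t : ℝ => ‖DF (u0 + t • (v - u0)) - DF u0‖)
          (nhdsWithin (1:ℝ) (Set.Ioo (0:ℝ) 1)) (nhds ‖DF v - DF u0‖) := by
        haveI : ContinuousSub (X →L[ℝ] Y →L[ℝ] ℝ) := by
          exact @IsTopologicalAddGroup.to_continuousSub (X →L[ℝ] Y →L[ℝ] ℝ) _ _ inferInstance
        have hc : Continuous fun t : ℝ => DF (u0 + t • (v - u0)) - DF u0 :=
          (hcont.comp (continuous_const.add
            (continuous_id.smul continuous_const))).sub continuous_const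
        have h2 := (hc.continuousAt (x := (1:ℝ))).continuousWithinAt
          (s := Set.Ioo (0:ℝ) 1)
        have h1 : u0 + (1:ℝ) • (v - u0) = v := by simp
        have h2' : Filter.Tendsto (fun t : ℝ => DF (u0 + t • (v - u0)) - DF u0)
            (nhdsWithin (1:ℝ) (Set.Ioo (0:ℝ) 1))
            (nhds (DF (u0 + (1:ℝ) • (v - u0)) - DF u0)) := h2
        have h3 : Filter.Tendsto (fun t : ℝ => ‖DF (u0 + t • (v - u0)) - DF u0‖)
            (nhdsWithin (1:ℝ) (Set.Ioo (0:ℝ) 1))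
            (nhds ‖DF (u0 + (1:ℝ) • (v - u0)) - DF u0‖) := Filter.Tendsto.norm (E := X →L[ℝ] Y →L[ℝ] ℝ) h2'
        rw [h1] at h3
        exact h3
      have hbd : ∀ᶠ t in nhdsWithin (1:ℝ) (Set.Ioo (0:ℝ) 1),
          ‖DF (u0 + t • (v - u0)) - DF u0‖ ≤ γ * R0 := by
        refine Filter.eventually_of_mem self_mem_nhdsWithin ?_
        intro t ht
        have hnorm : ‖(u0 + t • (v - u0)) - u0‖ = t * R0 := by
          simp [norm_smul, abs_of_pos ht.1, h]
        have hlt : ‖(u0 + t • (v - u0)) - u0‖ < R0 := by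
          rw [hnorm]; nlinarith [ht.2, hR0]
        calc ‖DF (u0 + t • (v - u0)) - DF u0‖ ≤ γ * ‖(u0 + t • (v - u0)) - u0‖ :=
              hLip _ hlt
          _ = γ * (t * R0) := by rw [hnorm]
          _ ≤ γ * R0 := by nlinarith [ht.2.le, hR0, hγ]
      have := le_of_tendsto htend hbd
      rw [h]; exact this
  intro u hu
  set r := ‖u - u0‖ with hr
  have hrR0 : r ≤ R0 := le_trans hu (min_le_left _ _)
  have hr2 : r ≤ (2 * γ)⁻¹ * N⁻¹ := le_trans hu (min_le_right _ _)
  have hr0 : 0 ≤ r := norm_nonneg _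
  -- mean value inequality on closed ball
  have hconv : Convex ℝ (Metric.closedBall u0 r) := convex_closedBall _ _
  have hmem_u : u ∈ Metric.closedBall u0 r := by
    simp [Metric.mem_closedBall, dist_eq_norm, hr]
  have hmem_u0 : u0 ∈ Metric.closedBall u0 r := Metric.mem_closedBall_self hr0
  have hbound : ∀ x ∈ Metric.closedBall u0 r, ‖DF x - DF u0‖ ≤ γ * r := by
    intro x hx
    have hx' : ‖x - u0‖ ≤ r := by simpa [Metric.mem_closedBall, dist_eq_norm] using hx
    exact le_trans (hLip' x (le_trans hx' hrR0))
      (mul_le_mul_of_nonneg_left hx' hγ.le)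
  have hmvt : ‖F u - F u0 - (DF u0) (u - u0)‖ ≤ (γ * r) * ‖u - u0‖ :=
    hconv.norm_image_sub_le_of_norm_hasFDerivWithin_le'
      (fun x _ => (hDF x).hasFDerivWithinAt) hbound hmem_u0 hmem_u
  rw [hroot, sub_zero, ← hr] at hmvt
  -- ‖u - u0‖ ≤ N * ‖DF u0 (u - u0)‖
  have hinv : r ≤ N * ‖(DF u0) (u - u0)‖ := by
    have h1 : u - u0 = (e.symm : (Y →L[ℝ] ℝ) →L[ℝ] X) ((DF u0) (u - u0)) := by
      rw [← he]
      exact (e.symm_apply_apply (u - u0)).symm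
    have h2 := ContinuousLinearMap.le_opNorm
      (e.symm : (Y →L[ℝ] ℝ) →L[ℝ] X) ((DF u0) (u - u0))
    rw [← h1] at h2
    exact h2
  have hDFu0 : ‖(DF u0) (u - u0)‖ ≤ ‖F u‖ + γ * r * r := by
    have := norm_sub_norm_le (F u) ((DF u0) (u - u0))
    linarith [hmvt, norm_sub_rev (F u) ((DF u0) (u - u0)) ▸ hmvt,
      norm_sub_norm_le ((DF u0) (u - u0)) (F u)]
  rcases eq_or_lt_of_le hr0 with h0 | h0
  · rw [← h0]; positivity
  · have hN0 : 0 ≤ N := hN ▸ ContinuousLinearMap.opNorm_nonneg _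
    have hNpos : 0 < N := by
      rcases eq_or_lt_of_le hN0 with hN' | hN'
      · exfalso; rw [← hN'] at hr2; simp at hr2; linarith
      · exact hN'
    have h2γ : (0:ℝ) < 2 * γ := by linarith
    have key : r ≤ N * ‖F u‖ + (N * γ * r) * r := by
      have h3 : N * ‖(DF u0) (u - u0)‖ ≤ N * (‖F u‖ + γ * r * r) :=
        mul_le_mul_of_nonneg_left hDFu0 hN0
      calc r ≤ N * ‖(DF u0) (u - u0)‖ := hinv
        _ ≤ N * (‖F u‖ + γ * r * r) := h3
        _ = N * ‖F u‖ + (N * γ * r) * r := by ring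
    have hsmall : N * γ * r ≤ 1 / 2 := by
      have h4 : r * (2 * γ * N) ≤ ((2 * γ)⁻¹ * N⁻¹) * (2 * γ * N) :=
        mul_le_mul_of_nonneg_right hr2 (mul_pos h2γ hNpos).le
      have h5 : ((2 * γ)⁻¹ * N⁻¹) * (2 * γ * N) = 1 := by field_simp
      nlinarith [h4, h5]
    have h6 : (N * γ * r) * r ≤ (1/2) * r :=
      mul_le_mul_of_nonneg_right hsmall h0.le
    have h7 : 0 ≤ N * ‖F u‖ := mul_nonneg hN0 (norm_nonneg _)
    linarith [key, h6]
end

section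
/- Let X, Y be Banach spaces, X_h ⊂ X, Y_h ⊂ Y closed subspaces, F : X → Y* continuous, F_h : X_h → Y_h*, R_h ∈ L(Y, Y_h) a bounded linear restriction operator, Ỹ_h ⊂ Y a subspace, and F̃_h : X_h → Y* a map. Suppose ‖(Id_Y − R_h)* F̃_h(u_h)‖_{Y*} ≤ C_0 ‖F̃_h(u_h)‖_{Ỹ_h*}. Then ‖F(u_h)‖_{Y*} ≤ C_0 ‖F̃_h(u_h)‖_{Ỹ_h*} + ‖(Id_Y − R_h)*[F(u_h) − F̃_h(u_h)]‖_{Y*} + ‖R_h‖ · ‖F(u_h) − F_h(u_h)‖_{Y_h*} + ‖R_h‖ · ‖F_h(u_h)‖_{Y_h*}, where for G ∈ Y*, (Id_Y − R_h)*G denotes the functional y ↦ G(y − R_h y), and ‖G‖_{Y_h*} denotes the norm of the restriction of G to Y_h. -/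
open ContinuousLinearMap

/-- Proposition 3.5 (Verfürth): splitting of the residual dual norm.
`Ytilh` plays the role of the auxiliary space `Ỹ_h`, `Fth` that of `F̃_h`. -/
theorem residual_dual_norm_splitting
    {X Y : Type*} [NormedAddCommGroup X] [NormedSpace ℝ X] [CompleteSpace X]
    [NormedAddCommGroup Y] [NormedSpace ℝ Y] [CompleteSpace Y]
    (Xh : Submodule ℝ X) (Yh : Submodule ℝ Y)
    (hXh : IsClosed (Xh : Set X)) (hYh : IsClosed (Yh : Set Y))
    (F : X → (Y →L[ℝ] ℝ)) (hF : Continuous F)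
    (Fh : Xh → (Yh →L[ℝ] ℝ))
    (Rh : Y →L[ℝ] Yh)
    (Ytilh : Submodule ℝ Y)
    (Fth : Xh → (Y →L[ℝ] ℝ))
    (uh : Xh) (C0 : ℝ) (hC0 : 0 < C0)
    (hbound : ‖(Fth uh).comp (ContinuousLinearMap.id ℝ Y - Yh.subtypeL.comp Rh)‖ ≤
        C0 * ‖(Fth uh).comp Ytilh.subtypeL‖) :
    ‖F (uh : X)‖ ≤ C0 * ‖(Fth uh).comp Ytilh.subtypeL‖
      + ‖(F (uh : X) - Fth uh).comp (ContinuousLinearMap.id ℝ Y - Yh.subtypeL.comp Rh)‖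
      + ‖Rh‖ * ‖(F (uh : X)).comp Yh.subtypeL - Fh uh‖
      + ‖Rh‖ * ‖Fh uh‖ := by
  set A := ContinuousLinearMap.id ℝ Y - Yh.subtypeL.comp Rh with hA
  have hdecomp : F (uh : X) =
      (F (uh : X)).comp A + ((F (uh : X)).comp Yh.subtypeL).comp Rh := by
    ext y
    simp [hA, map_sub]
  have h1 : ‖F (uh : X)‖ ≤ ‖(F (uh : X)).comp A‖ +
      ‖((F (uh : X)).comp Yh.subtypeL).comp Rh‖ := by
    calc ‖F (uh : X)‖ = ‖(F (uh : X)).comp A + ((F (uh : X)).comp Yh.subtypeL).comp Rh‖ := by rw [← hdecomp]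
      _ ≤ _ := norm_add_le _ _
  have h2 : (F (uh : X)).comp A = (Fth uh).comp A + (F (uh : X) - Fth uh).comp A := by
    ext y; simp
  have h3 : ‖(F (uh : X)).comp A‖ ≤ C0 * ‖(Fth uh).comp Ytilh.subtypeL‖ +
      ‖(F (uh : X) - Fth uh).comp A‖ := by
    rw [h2]
    exact (norm_add_le _ _).trans (add_le_add_left hbound _)
  have h4 : ((F (uh : X)).comp Yh.subtypeL).comp Rh =
      ((F (uh : X)).comp Yh.subtypeL - Fh uh).comp Rh + (Fh uh).comp Rh := by
    ext y; simp
  have h5 : ‖((F (uh : X)).comp Yh.subtypeL).comp Rh‖ ≤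
      ‖Rh‖ * ‖(F (uh : X)).comp Yh.subtypeL - Fh uh‖ + ‖Rh‖ * ‖Fh uh‖ := by
    rw [h4]
    refine (norm_add_le _ _).trans (add_le_add ?_ ?_)
    · refine (opNorm_comp_le _ _).trans ?_
      rw [mul_comm]
    · refine (opNorm_comp_le _ _).trans ?_
      rw [mul_comm]
  linarith
end
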